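/- Let L > 0 and s₀ ∈ ℝ, and define the ramp function g*(s) = 0 for s ≤ s₀, g*(s) = L(s − s₀) for s₀ < s < s₀ + 1/L, and g*(s) = 1 for s ≥ s₀ + 1/L. Then ∫_ℝ s · g*(s) · φ(s) ds = L · (Φ(s₀ + 1/L) − Φ(s₀)). -/

import Mathlib

open MeasureTheory Real

/-- Standard normal density `φ`. -/
noncomputable def stdGaussPDF (t : ℝ) : ℝ :=
  (Real.sqrt (2 * π))⁻¹ * Real.exp (-t ^ 2 / 2)

/-- Standard normal cumulative distribution function `Φ`. -/
noncomputable def stdGaussCDF (x : ℝ) : ℝ := ∫ t in Set.Iic x, stdGaussPDF t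

/-- The optimal ramp: `g*(s) = 0` for `s ≤ s₀`, `g*(s) = L (s - s₀)` for
`s₀ < s < s₀ + 1/L`, and `g*(s) = 1` for `s ≥ s₀ + 1/L`. -/
noncomputable def ramp (L s₀ s : ℝ) : ℝ :=
  if s ≤ s₀ then 0 else if s < s₀ + 1 / L then L * (s - s₀) else 1

lemma integrable_stdGaussPDF : Integrable stdGaussPDF := by
  have h := (integrable_exp_neg_mul_sq (by norm_num : (0:ℝ) < 1/2)).const_mul
    (Real.sqrt (2 * π))⁻¹
  refine h.congr (Filter.Eventually.of_forall fun x => ?_)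
  simp only [stdGaussPDF]
  ring_nf

lemma integrable_mul_stdGaussPDF : Integrable (fun s : ℝ => s * stdGaussPDF s) := by
  have h := (integrable_mul_exp_neg_mul_sq (by norm_num : (0:ℝ) < 1/2)).const_mul
    (Real.sqrt (2 * π))⁻¹
  refine h.congr (Filter.Eventually.of_forall fun x => ?_)
  simp only [stdGaussPDF]
  ring_nf

lemma continuous_stdGaussPDF : Continuous stdGaussPDF := by
  unfold stdGaussPDF
  continuity

lemma hasDerivAt_stdGaussPDF (s : ℝ) :
    HasDerivAt stdGaussPDF (-(s * stdGaussPDF s)) s := by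
  have hu : HasDerivAt (fun t : ℝ => -t ^ 2 / 2) (-s) s := by
    have := ((hasDerivAt_pow 2 s).neg.div_const 2)
    refine this.congr_deriv ?_
    ring
  have := (hu.exp.const_mul (Real.sqrt (2 * π))⁻¹)
  refine this.congr_deriv ?_
  simp only [stdGaussPDF]
  ring

lemma hasDerivAt_neg_stdGaussPDF (s : ℝ) :
    HasDerivAt (fun t => -stdGaussPDF t) (s * stdGaussPDF s) s := by
  have := (hasDerivAt_stdGaussPDF s).neg
  simp only [neg_neg] at this
  exact this

lemma tendsto_neg_stdGaussPDF :
    Filter.Tendsto (fun s => -stdGaussPDF s) Filter.atTop (nhds 0) := by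
  have h1 : Filter.Tendsto (fun s : ℝ => -s ^ 2 / 2) Filter.atTop Filter.atBot := by
    apply Filter.Tendsto.atBot_div_const (by norm_num)
    exact Filter.tendsto_neg_atBot_iff.mpr (Filter.tendsto_pow_atTop (by norm_num))
  have h2 : Filter.Tendsto stdGaussPDF Filter.atTop (nhds 0) := by
    have := (Real.tendsto_exp_atBot.comp h1).const_mul (Real.sqrt (2 * π))⁻¹
    rw [mul_zero] at this
    exact this.congr fun s => rfl
  simpa using h2.neg

lemma ramp_nonneg {L s₀ : ℝ} (hL : 0 < L) (s : ℝ) : 0 ≤ ramp L s₀ s := by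
  unfold ramp
  split_ifs with h1 h2
  · exact le_refl 0
  · push_neg at h1
    nlinarith
  · norm_num

lemma ramp_le_one {L s₀ : ℝ} (hL : 0 < L) (s : ℝ) : ramp L s₀ s ≤ 1 := by
  unfold ramp
  split_ifs with h1 h2
  · norm_num
  · push_neg at h1
    have h3 : s - s₀ < 1 / L := by linarith
    calc L * (s - s₀) ≤ L * (1 / L) := by nlinarith
    _ = 1 := by field_simp
  · exact le_refl 1

lemma measurable_ramp (L s₀ : ℝ) : Measurable (ramp L s₀) := by
  unfold ramp
  exact Measurable.ite (measurableSet_le measurable_id measurable_const) measurable_const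
    (Measurable.ite (measurableSet_lt measurable_id measurable_const)
      ((measurable_id.sub measurable_const).const_mul L) measurable_const)

/-- **Objective value of the optimal ramp.**
`∫ s g*(s) φ(s) ds = L (Φ(s₀ + 1/L) - Φ(s₀))`. -/
theorem ramp_objective (L s₀ : ℝ) (hL : 0 < L) :
    ∫ s, s * ramp L s₀ s * stdGaussPDF s
      = L * (stdGaussCDF (s₀ + 1 / L) - stdGaussCDF s₀) := by
  have hab : s₀ < s₀ + 1 / L := by
    have : 0 < 1 / L := by positivity
    linarith
  -- integrability of the full integrand
  have hf_meas : AEStronglyMeasurable (fun s => s * ramp L s₀ s * stdGaussPDF s) volume :=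
    ((measurable_id.mul (measurable_ramp L s₀)).mul
      continuous_stdGaussPDF.measurable).aestronglyMeasurable
  have hf_int : Integrable (fun s => s * ramp L s₀ s * stdGaussPDF s) := by
    refine integrable_mul_stdGaussPDF.mono hf_meas
      (Filter.Eventually.of_forall fun s => ?_)
    simp only [Real.norm_eq_abs, abs_mul]
    have h1 : |ramp L s₀ s| ≤ 1 := by
      rw [abs_le]
      exact ⟨by linarith [ramp_nonneg (s₀ := s₀) hL s], ramp_le_one (s₀ := s₀) hL s⟩
    calc |s| * |ramp L s₀ s| * |stdGaussPDF s|
        ≤ |s| * 1 * |stdGaussPDF s| := by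
          apply mul_le_mul_of_nonneg_right _ (abs_nonneg _)
          exact mul_le_mul_of_nonneg_left h1 (abs_nonneg _)
      _ = |s| * |stdGaussPDF s| := by ring
  -- restrict the integral to (s₀, ∞)
  have h0 : ∀ s ∉ Set.Ioi s₀, s * ramp L s₀ s * stdGaussPDF s = 0 := by
    intro s hs
    simp only [Set.mem_Ioi, not_lt] at hs
    simp [ramp, hs]
  rw [← setIntegral_eq_integral_of_forall_compl_eq_zero h0,
    ← Set.Ioc_union_Ioi_eq_Ioi hab.le,
    setIntegral_union (Set.Ioc_disjoint_Ioi le_rfl) measurableSet_Ioi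
      hf_int.integrableOn hf_int.integrableOn]
  -- tail integral
  have htail : ∫ s in Set.Ioi (s₀ + 1 / L), s * ramp L s₀ s * stdGaussPDF s
      = stdGaussPDF (s₀ + 1 / L) := by
    have hcongr : Set.EqOn (fun s => s * ramp L s₀ s * stdGaussPDF s)
        (fun s => s * stdGaussPDF s) (Set.Ioi (s₀ + 1 / L)) := by
      intro s hs
      simp only [Set.mem_Ioi] at hs
      have h1 : ¬ s ≤ s₀ := by linarith
      have h2 : ¬ s < s₀ + 1 / L := by linarith
      simp only [ramp, if_neg h1, if_neg h2, mul_one]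
    rw [setIntegral_congr_fun measurableSet_Ioi hcongr]
    have := integral_Ioi_of_hasDerivAt_of_tendsto
      (f := fun s => -stdGaussPDF s) (f' := fun s => s * stdGaussPDF s)
      (a := s₀ + 1 / L) (m := 0)
      ((hasDerivAt_neg_stdGaussPDF (s₀ + 1 / L)).continuousAt.continuousWithinAt)
      (fun x _ => hasDerivAt_neg_stdGaussPDF x)
      integrable_mul_stdGaussPDF.integrableOn
      tendsto_neg_stdGaussPDF
    simpa using this
  -- middle integral
  have hmid : ∫ s in Set.Ioc s₀ (s₀ + 1 / L), s * ramp L s₀ s * stdGaussPDF s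
      = -stdGaussPDF (s₀ + 1 / L)
        + L * (stdGaussCDF (s₀ + 1 / L) - stdGaussCDF s₀) := by
    rw [integral_Ioc_eq_integral_Ioo]
    have hcongr : Set.EqOn (fun s => s * ramp L s₀ s * stdGaussPDF s)
        (fun s => s * (L * (s - s₀)) * stdGaussPDF s) (Set.Ioo s₀ (s₀ + 1 / L)) := by
      intro s hs
      obtain ⟨h1, h2⟩ := hs
      have h1' : ¬ s ≤ s₀ := not_le.mpr h1
      simp only [ramp, if_neg h1', if_pos h2]
    rw [setIntegral_congr_fun measurableSet_Ioo hcongr, ← integral_Ioc_eq_integral_Ioo,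
      ← intervalIntegral.integral_of_le hab.le]
    -- FTC setup
    have hF : ∀ s : ℝ, HasDerivAt (fun t => -(L * (t - s₀) * stdGaussPDF t))
        (s * (L * (s - s₀)) * stdGaussPDF s - L * stdGaussPDF s) s := by
      intro s
      have h1 : HasDerivAt (fun t : ℝ => L * (t - s₀)) L s := by
        simpa using ((hasDerivAt_id s).sub_const s₀).const_mul L
      have := (h1.mul (hasDerivAt_stdGaussPDF s)).neg
      refine this.congr_deriv ?_
      ring
    have hcontF' : Continuous (fun s : ℝ => s * (L * (s - s₀)) * stdGaussPDF s
        - L * stdGaussPDF s) := by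
      apply Continuous.sub
      · exact (continuous_id.mul (continuous_const.mul
          (continuous_id.sub continuous_const))).mul continuous_stdGaussPDF
      · exact continuous_const.mul continuous_stdGaussPDF
    have hsplit : ∀ s : ℝ, s * (L * (s - s₀)) * stdGaussPDF s
        = (s * (L * (s - s₀)) * stdGaussPDF s - L * stdGaussPDF s) + L * stdGaussPDF s := by
      intro s; ring
    rw [intervalIntegral.integral_congr (fun s _ => hsplit s),
      intervalIntegral.integral_add (g := fun s => L * stdGaussPDF s) (hcontF'.intervalIntegrable _ _)
        ((continuous_const.mul continuous_stdGaussPDF).intervalIntegrable _ _),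
      intervalIntegral.integral_eq_sub_of_hasDerivAt (fun x _ => hF x)
        (hcontF'.intervalIntegrable _ _),
      intervalIntegral.integral_const_mul]
    have hcdf : ∫ s in s₀..(s₀ + 1 / L), stdGaussPDF s
        = stdGaussCDF (s₀ + 1 / L) - stdGaussCDF s₀ := by
      rw [stdGaussCDF, stdGaussCDF]
      exact (intervalIntegral.integral_Iic_sub_Iic integrable_stdGaussPDF.integrableOn
        integrable_stdGaussPDF.integrableOn).symm
    rw [hcdf]
    have hbval : L * (s₀ + 1 / L - s₀) = 1 := by
      field_simp
      ring
    have h9 : -(L * (s₀ + 1 / L - s₀) * stdGaussPDF (s₀ + 1 / L))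
        - -(L * (s₀ - s₀) * stdGaussPDF s₀) = -stdGaussPDF (s₀ + 1 / L) := by
      rw [hbval]; ring
    rw [h9]
  rw [htail, hmid]
  ring
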